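/- Let X be a real Banach space, U a strongly continuous one-parameter group of linear isometries of X, 0 ≤ s < T, M ≥ 0. Let B, D : [s,T] → L(X) be continuous with ‖B(t)‖ ≤ M and sup_{t∈[s,T]} ‖D(t)‖ ≤ 1, let S_B and S_{B+D} be the evolution operators associated to the potentials B and B+D respectively, let w_s ∈ X, and define z(t) = ∫_s^t S_B(t,τ)(D(τ)(S_B(τ,s)w_s)) dτ. Then for every t ∈ [s,T]: ‖S_{B+D}(t,s)w_s − S_B(t,s)w_s − z(t)‖ ≤ (T−s)² e^{(3M+2)(T−s)} (sup_{τ∈[s,T]} ‖D(τ)‖)² ‖w_s‖. In other words, the map from the potential to the evolution operator is differentiable with derivative in direction D given by z, with quadratic remainder. -/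

import Mathlib

open MeasureTheory Set Filter Topology

section helpers

variable {X : Type*} [NormedAddCommGroup X] [NormedSpace ℝ X] [CompleteSpace X]

omit [CompleteSpace X] in
lemma grp_norm_le (U : ℝ → X →L[ℝ] X) (hUiso : ∀ (t : ℝ) (x : X), ‖U t x‖ = ‖x‖) (t : ℝ) :
    ‖U t‖ ≤ 1 :=
  (U t).opNorm_le_bound zero_le_one (fun x => by rw [hUiso, one_mul])

omit [CompleteSpace X] in
lemma grp_cont2 (U : ℝ → X →L[ℝ] X) (hUiso : ∀ (t : ℝ) (x : X), ‖U t x‖ = ‖x‖)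
    (hUcont : ∀ x : X, Continuous fun t : ℝ => U t x) :
    Continuous fun p : ℝ × X => U p.1 p.2 := by
  rw [continuous_iff_continuousAt]
  rintro ⟨t₀, x₀⟩
  have h1 : Tendsto (fun p : ℝ × X => U p.1 x₀) (𝓝 (t₀, x₀)) (𝓝 (U t₀ x₀)) :=
    ((hUcont x₀).comp continuous_fst).tendsto _
  have h0 : Tendsto (fun p : ℝ × X => U p.1 (p.2 - x₀)) (𝓝 (t₀, x₀)) (𝓝 0) := by
    apply squeeze_zero_norm (fun p : ℝ × X => le_of_eq (hUiso p.1 (p.2 - x₀)))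
    have : Tendsto (fun p : ℝ × X => ‖p.2 - x₀‖) (𝓝 (t₀, x₀)) (𝓝 ‖x₀ - x₀‖) :=
      ((continuous_snd.sub continuous_const).norm).tendsto _
    simpa using this
  have h2 : Tendsto (fun p : ℝ × X => U p.1 (p.2 - x₀) + U p.1 x₀) (𝓝 (t₀, x₀))
      (𝓝 (0 + U t₀ x₀)) := h0.add h1
  rw [zero_add] at h2
  refine h2.congr (fun p => ?_)
  rw [← map_add]; congr 1; abel

lemma gronwallBound_le_crude {δ K ε x x' : ℝ} (hδ : 0 ≤ δ) (hK : 0 ≤ K) (hε : 0 ≤ ε)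
    (hx : 0 ≤ x) (hxx : x ≤ x') :
    gronwallBound δ K ε x ≤ (δ + ε * x') * Real.exp (K * x') := by
  have hE : Real.exp (K * x) ≤ Real.exp (K * x') := by
    apply Real.exp_le_exp.2; nlinarith
  have hE1 : (1:ℝ) ≤ Real.exp (K * x) := by
    rw [← Real.exp_zero]; apply Real.exp_le_exp.2; positivity
  rcases eq_or_lt_of_le hK with hK0 | hKpos
  · rw [← hK0]
    simp only [gronwallBound_K0, zero_mul, Real.exp_zero, mul_one]
    nlinarith
  · rw [gronwallBound_of_K_ne_0 hKpos.ne']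
    have key : Real.exp (K * x) - 1 ≤ K * x * Real.exp (K * x) := by
      have h := Real.add_one_le_exp (-(K * x))
      rw [Real.exp_neg] at h
      have hEpos : 0 < Real.exp (K * x) := Real.exp_pos _
      have hinv : (Real.exp (K * x))⁻¹ * Real.exp (K * x) = 1 := inv_mul_cancel₀ hEpos.ne'
      nlinarith [mul_le_mul_of_nonneg_right h hEpos.le]
    have h2 : ε / K * (Real.exp (K * x) - 1) ≤ ε * x' * Real.exp (K * x') := by
      have hstep : ε / K * (Real.exp (K * x) - 1) ≤ ε / K * (K * x * Real.exp (K * x)) :=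
        mul_le_mul_of_nonneg_left key (div_nonneg hε hKpos.le)
      calc ε / K * (Real.exp (K * x) - 1) ≤ ε / K * (K * x * Real.exp (K * x)) := hstep
        _ = ε * x * Real.exp (K * x) := by field_simp
        _ ≤ ε * x' * Real.exp (K * x') :=
            mul_le_mul (mul_le_mul_of_nonneg_left hxx hε) hE (Real.exp_pos _).le
              (mul_nonneg hε (hx.trans hxx))
    have h3 : δ * Real.exp (K * x) ≤ δ * Real.exp (K * x') :=
      mul_le_mul_of_nonneg_left hE hδ
    show δ * Real.exp (K * x) + ε / K * (Real.exp (K * x) - 1) ≤ _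
    nlinarith

lemma mild_bound (U : ℝ → X →L[ℝ] X)
    (hU0 : U 0 = ContinuousLinearMap.id ℝ X)
    (hUadd : ∀ a b : ℝ, U (a + b) = (U a).comp (U b))
    (hUiso : ∀ (t : ℝ) (x : X), ‖U t x‖ = ‖x‖)
    (hUcont : ∀ x : X, Continuous fun t : ℝ => U t x)
    {a b K ε : ℝ} (hK : 0 ≤ K) (hε : 0 ≤ ε)
    (x : X) (w h : ℝ → X)
    (hw : ContinuousOn w (Icc a b)) (hh : ContinuousOn h (Icc a b))
    (hbd : ∀ τ ∈ Icc a b, ‖h τ‖ ≤ K * ‖w τ‖ + ε)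
    (heq : ∀ t ∈ Icc a b, w t = U (t - a) x + ∫ τ in a..t, U (t - τ) (h τ)) :
    ∀ t ∈ Icc a b, ‖w t‖ ≤ (‖x‖ + ε * (b - a)) * Real.exp (K * (b - a)) := by
  intro t ht
  have hab : a ≤ b := le_trans ht.1 ht.2
  have hUc2 := grp_cont2 U hUiso hUcont
  set g : ℝ → X := fun τ => U (-τ) (h τ) with hg
  have hgc : ContinuousOn g (Icc a b) :=
    hUc2.comp_continuousOn ((continuous_neg.continuousOn).prodMk hh)
  have hgi : ∀ c d, c ∈ Icc a b → d ∈ Icc a b → IntervalIntegrable g volume c d := fun c d hc hd =>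
    (hgc.mono (uIcc_subset_Icc hc hd)).intervalIntegrable
  set y : ℝ → X := fun t => U (-t) (w t) with hy
  have hyc : ContinuousOn y (Icc a b) :=
    hUc2.comp_continuousOn ((continuous_neg.continuousOn).prodMk hw)
  have hynorm : ∀ t, ‖y t‖ = ‖w t‖ := fun t => hUiso _ _
  have hcomp : ∀ (c d : ℝ) (v : X), U c (U d v) = U (c + d) v := by
    intro c d v; rw [hUadd]; rfl
  have hyeq : ∀ t' ∈ Icc a b, y t' = U (-a) x + ∫ τ in a..t', g τ := by
    intro t' ht'
    have hii : IntervalIntegrable (fun τ => U (t' - τ) (h τ)) volume a t' := by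
      apply ContinuousOn.intervalIntegrable
      exact hUc2.comp_continuousOn (((continuous_const.sub continuous_id).continuousOn).prodMk
        (hh.mono (uIcc_subset_Icc (left_mem_Icc.2 hab) ht')))
    show U (-t') (w t') = _
    rw [heq t' ht', map_add, ← (U (-t')).intervalIntegral_comp_comm hii, hcomp]
    congr 1
    · congr 1; ring
    · apply intervalIntegral.integral_congr
      intro τ _
      show U (-t') (U (t' - τ) (h τ)) = g τ
      rw [hcomp]
      show U (-t' + (t' - τ)) (h τ) = U (-τ) (h τ)
      congr 2; ring
  have hwa : w a = x := by
    simpa [hU0] using heq a (left_mem_Icc.2 hab)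
  have hgron : ∀ t ∈ Icc a b, ‖y t‖ ≤ gronwallBound ‖x‖ K ε (t - a) := by
    apply norm_le_gronwallBound_of_norm_deriv_right_le (f' := g) hyc
    · intro t' ht'
      have hmem : Icc a b ∈ 𝓝[≥] t' := Icc_mem_nhdsGE_of_mem ht'
      have hmem' : Icc a b ∈ 𝓝[>] t' :=
        mem_of_superset (Ioo_mem_nhdsGT_of_mem ⟨le_refl t', ht'.2⟩)
          ((Ioo_subset_Icc_self).trans (Icc_subset_Icc ht'.1 le_rfl))
      have hY : HasDerivWithinAt (fun u => U (-a) x + ∫ τ in a..u, g τ) (g t') (Ici t') t' := by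
        apply HasDerivWithinAt.const_add
        exact intervalIntegral.integral_hasDerivWithinAt_right
          (hgi a t' (left_mem_Icc.2 hab) ⟨ht'.1, ht'.2.le⟩)
          ⟨Icc a b, hmem', hgc.aestronglyMeasurable measurableSet_Icc⟩
          ((hgc t' ⟨ht'.1, ht'.2.le⟩).mono_of_mem_nhdsWithin hmem')
      exact hY.congr_of_eventuallyEq
        (eventuallyEq_of_mem hmem (fun u hu => hyeq u hu)) (hyeq t' ⟨ht'.1, ht'.2.le⟩)
    · rw [hynorm, hwa]
    · intro t' ht'
      have : ‖g t'‖ = ‖h t'‖ := hUiso _ _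
      rw [this, hynorm]
      exact hbd t' ⟨ht'.1, ht'.2.le⟩
  calc ‖w t‖ = ‖y t‖ := (hynorm t).symm
    _ ≤ gronwallBound ‖x‖ K ε (t - a) := hgron t ht
    _ ≤ (‖x‖ + ε * (b - a)) * Real.exp (K * (b - a)) :=
        gronwallBound_le_crude (norm_nonneg x) hK hε (by linarith [ht.1]) (by linarith [ht.2])


end helpers

lemma triangle_swap {E : Type*} [NormedAddCommGroup E] [NormedSpace ℝ E] [CompleteSpace E]
    {a b : ℝ} (hab : a ≤ b) (F : ℝ × ℝ → E) (hF : Continuous F) :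
    (∫ τ in a..b, ∫ σ in τ..b, F (σ, τ)) = ∫ σ in a..b, ∫ τ in a..σ, F (σ, τ) := by
  obtain ⟨C, hC⟩ : ∃ C, ∀ p ∈ Icc a b ×ˢ Icc a b, ‖F p‖ ≤ C :=
    (isCompact_Icc.prod isCompact_Icc).exists_bound_of_continuousOn hF.continuousOn
  have hC0 : 0 ≤ C := le_trans (norm_nonneg _) (hC (a, a) (by simp [hab]))
  set μ : Measure ℝ := volume.restrict (Ioc a b) with hμ
  haveI : IsFiniteMeasure μ := ⟨by rw [hμ, Measure.restrict_apply_univ]; exact measure_Ioc_lt_top⟩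
  set G : ℝ × ℝ → E := fun q => if q.1 < q.2 then F (q.2, q.1) else 0 with hG
  have hGind : G = {q : ℝ × ℝ | q.1 < q.2}.indicator (fun q => F (q.2, q.1)) := by
    funext q
    by_cases h : q.1 < q.2 <;> simp [G, indicator, h]
  have hGmeas : AEStronglyMeasurable G (μ.prod μ) := by
    rw [hGind]
    exact ((hF.comp continuous_swap).aestronglyMeasurable).indicator
      (measurableSet_lt measurable_fst measurable_snd)
  have hGint : Integrable G (μ.prod μ) := by
    apply Integrable.mono' (integrable_const C) hGmeas
    have hae : ∀ᵐ q ∂(μ.prod μ), q ∈ Ioc a b ×ˢ Ioc a b := by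
      rw [hμ, Measure.prod_restrict]
      exact ae_restrict_mem (measurableSet_Ioc.prod measurableSet_Ioc)
    filter_upwards [hae] with q hq
    rcases lt_or_ge q.1 q.2 with h | h
    · have : G q = F (q.2, q.1) := if_pos h
      rw [this]
      exact hC (q.2, q.1) ⟨Ioc_subset_Icc_self hq.2, Ioc_subset_Icc_self hq.1⟩
    · have : G q = 0 := if_neg (not_lt.2 h)
      rw [this, norm_zero]; exact hC0
  have hswap := MeasureTheory.integral_integral_swap (f := fun τ σ => G (τ, σ))
    (μ := μ) (ν := μ) hGint
  -- LHS identification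
  have hL : (∫ τ in a..b, ∫ σ in τ..b, F (σ, τ)) = ∫ τ, (∫ σ, G (τ, σ) ∂μ) ∂μ := by
    rw [intervalIntegral.integral_of_le hab]
    apply setIntegral_congr_fun measurableSet_Ioc
    intro τ hτ
    have h1 : ∀ σ, G (τ, σ) = (Ioi τ).indicator (fun σ => F (σ, τ)) σ := by
      intro σ
      by_cases h : τ < σ <;> simp [G, indicator, h, mem_Ioi]
    calc (∫ σ in τ..b, F (σ, τ)) = ∫ σ in Ioc τ b, F (σ, τ) :=
          intervalIntegral.integral_of_le hτ.2
      _ = ∫ σ in Ioc a b ∩ Ioi τ, F (σ, τ) := by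
          rw [Ioc_inter_Ioi, max_eq_right hτ.1.le]
      _ = ∫ σ in Ioc a b, (Ioi τ).indicator (fun σ => F (σ, τ)) σ := by
          rw [setIntegral_indicator measurableSet_Ioi]
      _ = ∫ σ, G (τ, σ) ∂μ := by
          rw [hμ]; apply setIntegral_congr_fun measurableSet_Ioc
          intro σ _; exact (h1 σ).symm
  -- RHS identification
  have hR : (∫ σ in a..b, ∫ τ in a..σ, F (σ, τ)) = ∫ σ, (∫ τ, G (τ, σ) ∂μ) ∂μ := by
    rw [intervalIntegral.integral_of_le hab]
    apply setIntegral_congr_fun measurableSet_Ioc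
    intro σ hσ
    have h1 : ∀ τ, G (τ, σ) = (Iio σ).indicator (fun τ => F (σ, τ)) τ := by
      intro τ
      by_cases h : τ < σ <;> simp [G, indicator, h, mem_Iio]
    have h2 : Ioc a b ∩ Iio σ = Ioo a σ := by
      ext r
      simp only [mem_inter_iff, mem_Ioc, mem_Iio, mem_Ioo]
      constructor
      · rintro ⟨⟨h3, _⟩, h5⟩; exact ⟨h3, h5⟩
      · rintro ⟨h3, h5⟩; exact ⟨⟨h3, le_trans h5.le hσ.2⟩, h5⟩
    calc (∫ τ in a..σ, F (σ, τ)) = ∫ τ in Ioc a σ, F (σ, τ) :=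
          intervalIntegral.integral_of_le hσ.1.le
      _ = ∫ τ in Ioo a σ, F (σ, τ) := integral_Ioc_eq_integral_Ioo
      _ = ∫ τ in Ioc a b ∩ Iio σ, F (σ, τ) := by rw [h2]
      _ = ∫ τ in Ioc a b, (Iio σ).indicator (fun τ => F (σ, τ)) τ := by
          rw [setIntegral_indicator measurableSet_Iio]
      _ = ∫ τ, G (τ, σ) ∂μ := by
          rw [hμ]; apply setIntegral_congr_fun measurableSet_Ioc
          intro τ _; exact (h1 τ).symm
  rw [hL, hR]
  exact hswap
set_option maxHeartbeats 1000000 in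
/-- differentiability of the potential-to-evolution-operator map,
with explicit derivative and quadratic remainder. -/
theorem stmt_5
    {X : Type*} [NormedAddCommGroup X] [NormedSpace ℝ X] [CompleteSpace X]
    (U : ℝ → X →L[ℝ] X)
    (hU0 : U 0 = ContinuousLinearMap.id ℝ X)
    (hUadd : ∀ a b : ℝ, U (a + b) = (U a).comp (U b))
    (hUiso : ∀ (t : ℝ) (x : X), ‖U t x‖ = ‖x‖)
    (hUcont : ∀ x : X, Continuous fun t : ℝ => U t x)
    (s T M : ℝ) (hs : 0 ≤ s) (hsT : s < T) (hM : 0 ≤ M)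
    (B D : ℝ → X →L[ℝ] X)
    (hBcont : ContinuousOn B (Icc s T))
    (hBbound : ∀ t ∈ Icc s T, ‖B t‖ ≤ M)
    (hDcont : ContinuousOn D (Icc s T))
    (hDbound : ∀ t ∈ Icc s T, ‖D t‖ ≤ 1)
    -- the evolution operator of the potential `B`
    (SB : ℝ → ℝ → X →L[ℝ] X)
    (hSBcont : ∀ s' ∈ Icc s T, ∀ x : X, ContinuousOn (fun t => SB t s' x) (Icc s' T))
    (hSBeq : ∀ s' ∈ Icc s T, ∀ x : X, ∀ t ∈ Icc s' T,
      SB t s' x = U (t - s') x + ∫ τ in s'..t, U (t - τ) (B τ (SB τ s' x)))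
    -- the evolution operator of the potential `B + D`, from initial time `s`
    (SBD : ℝ → X →L[ℝ] X)
    (hSBDcont : ∀ x : X, ContinuousOn (fun t => SBD t x) (Icc s T))
    (hSBDeq : ∀ x : X, ∀ t ∈ Icc s T,
      SBD t x = U (t - s) x + ∫ τ in s..t, U (t - τ) ((B τ + D τ) (SBD τ x)))
    (ws : X)
    (z : ℝ → X)
    (hz : ∀ t : ℝ, z t = ∫ τ in s..t, SB t τ (D τ (SB τ s ws))) :
    ∀ t ∈ Icc s T,
      ‖SBD t ws - SB t s ws - z t‖ ≤
        (T - s) ^ 2 * Real.exp ((3 * M + 2) * (T - s)) *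
          (⨆ τ : Icc s T, ‖D (τ : ℝ)‖) ^ 2 * ‖ws‖ := by
  have hsT' : s ≤ T := hsT.le
  have hUc2 := grp_cont2 U hUiso hUcont
  have hsmem : s ∈ Icc s T := ⟨le_rfl, hsT'⟩
  set C := Real.exp (M * (T - s)) with hCdef
  have hC1 : (1:ℝ) ≤ C := by
    rw [hCdef, ← Real.exp_zero]
    apply Real.exp_le_exp.2; nlinarith
  have hUcomp : ∀ (c d : ℝ) (v : X), U c (U d v) = U (c + d) v := by
    intro c d v; rw [hUadd]; rfl
  -- clamping to [s, T]
  set cl : ℝ → ℝ := fun r => max s (min r T) with hcl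
  have hcl_mem : ∀ r, cl r ∈ Icc s T := fun r =>
    ⟨le_max_left _ _, max_le hsT' (min_le_right _ _)⟩
  have hcl_id : ∀ r ∈ Icc s T, cl r = r := by
    intro r hr
    show max s (min r T) = r
    rw [min_eq_left hr.2, max_eq_right hr.1]
  have hcl_cont : Continuous cl := continuous_const.max (continuous_id.min continuous_const)
  -- integrability helper
  have hUii : ∀ (hfun : ℝ → X) (a' b' : ℝ), ContinuousOn hfun (Icc a' b') → ∀ (t c d : ℝ),
      c ∈ Icc a' b' → d ∈ Icc a' b' →
      IntervalIntegrable (fun τ => U (t - τ) (hfun τ)) volume c d := by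
    intro hfun a' b' hc t c d hcm hdm
    apply ContinuousOn.intervalIntegrable
    exact hUc2.comp_continuousOn (((continuous_const.sub continuous_id).continuousOn).prodMk
      (hc.mono (uIcc_subset_Icc hcm hdm)))
  -- SB at coinciding times
  have hSBself : ∀ τ ∈ Icc s T, ∀ x : X, SB τ τ x = x := by
    intro τ hτ x
    simpa [hU0] using hSBeq τ hτ x τ ⟨le_rfl, hτ.2⟩
  have hBSB : ∀ τ ∈ Icc s T, ∀ x : X, ContinuousOn (fun σ => B σ (SB σ τ x)) (Icc τ T) :=
    fun τ hτ x => (hBcont.mono (Icc_subset_Icc_left hτ.1)).clm_apply (hSBcont τ hτ x)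
  -- uniform bound for SB
  have hSBnorm : ∀ τ ∈ Icc s T, ∀ t ∈ Icc τ T, ∀ x : X, ‖SB t τ x‖ ≤ C * ‖x‖ := by
    intro τ hτ t ht x
    have hbd : ∀ σ ∈ Icc τ T, ‖B σ (SB σ τ x)‖ ≤ M * ‖SB σ τ x‖ + 0 := by
      intro σ hσ
      rw [add_zero]
      calc ‖B σ (SB σ τ x)‖ ≤ ‖B σ‖ * ‖SB σ τ x‖ := (B σ).le_opNorm _
        _ ≤ M * ‖SB σ τ x‖ :=
            mul_le_mul_of_nonneg_right (hBbound σ ⟨le_trans hτ.1 hσ.1, hσ.2⟩) (norm_nonneg _)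
    have hKey := mild_bound U hU0 hUadd hUiso hUcont (K := M) (ε := 0) hM le_rfl x
      (fun t' => SB t' τ x) (fun σ => B σ (SB σ τ x)) (hSBcont τ hτ x) (hBSB τ hτ x)
      hbd (fun t' ht' => hSBeq τ hτ x t' ht') t ht
    calc ‖SB t τ x‖ ≤ (‖x‖ + 0 * (T - τ)) * Real.exp (M * (T - τ)) := hKey
      _ = Real.exp (M * (T - τ)) * ‖x‖ := by ring
      _ ≤ C * ‖x‖ := by
          apply mul_le_mul_of_nonneg_right _ (norm_nonneg x)
          rw [hCdef]
          apply Real.exp_le_exp.2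
          have := hτ.1
          nlinarith
  -- distance of SB from the group
  have hQ1 : ∀ τ ∈ Icc s T, ∀ t ∈ Icc τ T, ∀ x : X,
      ‖SB t τ x - U (t - τ) x‖ ≤ (t - τ) * (M * (C * ‖x‖)) := by
    intro τ hτ t ht x
    have hrw : SB t τ x - U (t - τ) x = ∫ σ in τ..t, U (t - σ) (B σ (SB σ τ x)) := by
      rw [hSBeq τ hτ x t ht]; abel
    rw [hrw]
    have hb : ∀ σ ∈ Set.uIoc τ t, ‖U (t - σ) (B σ (SB σ τ x))‖ ≤ M * (C * ‖x‖) := by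
      intro σ hσ
      rw [Set.uIoc_of_le ht.1] at hσ
      have hσ' : σ ∈ Icc τ T := ⟨hσ.1.le, le_trans hσ.2 ht.2⟩
      rw [hUiso]
      calc ‖B σ (SB σ τ x)‖ ≤ ‖B σ‖ * ‖SB σ τ x‖ := (B σ).le_opNorm _
        _ ≤ M * (C * ‖x‖) := mul_le_mul (hBbound σ ⟨le_trans hτ.1 hσ'.1, hσ'.2⟩)
            (hSBnorm τ hτ σ hσ' x) (norm_nonneg _) hM
    calc ‖∫ σ in τ..t, U (t - σ) (B σ (SB σ τ x))‖ ≤ M * (C * ‖x‖) * |t - τ| :=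
        intervalIntegral.norm_integral_le_of_norm_le_const hb
      _ = (t - τ) * (M * (C * ‖x‖)) := by
          rw [abs_of_nonneg (by linarith [ht.1] : (0:ℝ) ≤ t - τ)]; ring
  have hQ1' : ∀ τ ∈ Icc s T, ∀ t ∈ Icc τ T, ∀ x : X,
      ‖SB t τ x - x‖ ≤ ‖U (t - τ) x - x‖ + (t - τ) * (M * (C * ‖x‖)) := by
    intro τ hτ t ht x
    calc ‖SB t τ x - x‖ = ‖(SB t τ x - U (t - τ) x) + (U (t - τ) x - x)‖ := by
          congr 1; abel
      _ ≤ ‖SB t τ x - U (t - τ) x‖ + ‖U (t - τ) x - x‖ := norm_add_le _ _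
      _ ≤ (t - τ) * (M * (C * ‖x‖)) + ‖U (t - τ) x - x‖ :=
          add_le_add_left (hQ1 τ hτ t ht x) _
      _ = ‖U (t - τ) x - x‖ + (t - τ) * (M * (C * ‖x‖)) := add_comm _ _
  -- uniqueness of solutions of the Volterra equation with potential B
  have huniq : ∀ a ∈ Icc s T, ∀ (x : X) (w1 w2 : ℝ → X), ContinuousOn w1 (Icc a T) →
      ContinuousOn w2 (Icc a T) →
      (∀ t ∈ Icc a T, w1 t = U (t - a) x + ∫ τ in a..t, U (t - τ) (B τ (w1 τ))) →
      (∀ t ∈ Icc a T, w2 t = U (t - a) x + ∫ τ in a..t, U (t - τ) (B τ (w2 τ))) →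
      ∀ t ∈ Icc a T, w1 t = w2 t := by
    intro a ha x w1 w2 hw1 hw2 he1 he2
    have hBmono := hBcont.mono (Icc_subset_Icc_left ha.1)
    have hBw1 : ContinuousOn (fun τ => B τ (w1 τ)) (Icc a T) := hBmono.clm_apply hw1
    have hBw2 : ContinuousOn (fun τ => B τ (w2 τ)) (Icc a T) := hBmono.clm_apply hw2
    have heqd : ∀ t ∈ Icc a T, w1 t - w2 t =
        U (t - a) (0 : X) + ∫ τ in a..t, U (t - τ) (B τ (w1 τ - w2 τ)) := by
      intro t ht
      rw [map_zero, zero_add, he1 t ht, he2 t ht, add_sub_add_left_eq_sub,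
        ← intervalIntegral.integral_sub (hUii _ a T hBw1 t a t (left_mem_Icc.2 ha.2) ht)
          (hUii _ a T hBw2 t a t (left_mem_Icc.2 ha.2) ht)]
      apply intervalIntegral.integral_congr
      intro τ _
      simp only [← map_sub]
    have hbd : ∀ τ ∈ Icc a T, ‖B τ (w1 τ - w2 τ)‖ ≤ M * ‖w1 τ - w2 τ‖ + 0 := by
      intro τ hτ
      rw [add_zero]
      calc ‖B τ (w1 τ - w2 τ)‖ ≤ ‖B τ‖ * ‖w1 τ - w2 τ‖ := (B τ).le_opNorm _
        _ ≤ M * ‖w1 τ - w2 τ‖ := mul_le_mul_of_nonneg_right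
            (hBbound τ ⟨le_trans ha.1 hτ.1, hτ.2⟩) (norm_nonneg _)
    intro t ht
    have hzb := mild_bound U hU0 hUadd hUiso hUcont (K := M) (ε := 0) hM le_rfl (0 : X)
      (fun t' => w1 t' - w2 t') (fun τ => B τ (w1 τ - w2 τ)) (hw1.sub hw2)
      (hBmono.clm_apply (hw1.sub hw2)) hbd heqd t ht
    have : ‖w1 t - w2 t‖ ≤ 0 := by simpa using hzb
    have := norm_le_zero_iff.1 this
    exact sub_eq_zero.1 this
  -- the cocycle property
  have hcoc : ∀ τ₁ ∈ Icc s T, ∀ τ₂ ∈ Icc τ₁ T, ∀ x : X, ∀ t ∈ Icc τ₂ T,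
      SB t τ₁ x = SB t τ₂ (SB τ₂ τ₁ x) := by
    intro τ₁ hτ₁ τ₂ hτ₂ x t ht
    have hτ₂' : τ₂ ∈ Icc s T := ⟨le_trans hτ₁.1 hτ₂.1, hτ₂.2⟩
    apply huniq τ₂ hτ₂' (SB τ₂ τ₁ x) (fun t' => SB t' τ₁ x) (fun t' => SB t' τ₂ (SB τ₂ τ₁ x))
      ((hSBcont τ₁ hτ₁ x).mono (Icc_subset_Icc_left hτ₂.1)) (hSBcont τ₂ hτ₂' _)
      ?_ (fun t' ht' => hSBeq τ₂ hτ₂' _ t' ht') t ht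
    intro t' ht'
    have ht'' : t' ∈ Icc τ₁ T := ⟨le_trans hτ₂.1 ht'.1, ht'.2⟩
    have hii12 : IntervalIntegrable (fun σ => U (τ₂ - σ) (B σ (SB σ τ₁ x))) volume τ₁ τ₂ :=
      hUii _ τ₁ T (hBSB τ₁ hτ₁ x) τ₂ τ₁ τ₂ ⟨le_rfl, hτ₁.2⟩ hτ₂
    have hiiA : IntervalIntegrable (fun σ => U (t' - σ) (B σ (SB σ τ₁ x))) volume τ₁ τ₂ :=
      hUii _ τ₁ T (hBSB τ₁ hτ₁ x) t' τ₁ τ₂ ⟨le_rfl, hτ₁.2⟩ hτ₂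
    have hiiB : IntervalIntegrable (fun σ => U (t' - σ) (B σ (SB σ τ₁ x))) volume τ₂ t' :=
      hUii _ τ₁ T (hBSB τ₁ hτ₁ x) t' τ₂ t' hτ₂ ht''
    calc SB t' τ₁ x = U (t' - τ₁) x + ∫ σ in τ₁..t', U (t' - σ) (B σ (SB σ τ₁ x)) :=
          hSBeq τ₁ hτ₁ x t' ht''
      _ = U (t' - τ₁) x + ((∫ σ in τ₁..τ₂, U (t' - σ) (B σ (SB σ τ₁ x)))
            + ∫ σ in τ₂..t', U (t' - σ) (B σ (SB σ τ₁ x))) := by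
          rw [intervalIntegral.integral_add_adjacent_intervals hiiA hiiB]
      _ = (U (t' - τ₁) x + ∫ σ in τ₁..τ₂, U (t' - σ) (B σ (SB σ τ₁ x)))
            + ∫ σ in τ₂..t', U (t' - σ) (B σ (SB σ τ₁ x)) := by rw [add_assoc]
      _ = U (t' - τ₂) (SB τ₂ τ₁ x) + ∫ σ in τ₂..t', U (t' - σ) (B σ (SB σ τ₁ x)) := by
          congr 1
          rw [hSBeq τ₁ hτ₁ x τ₂ hτ₂, map_add,
            ← (U (t' - τ₂)).intervalIntegral_comp_comm hii12]
          congr 1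
          · rw [hUcomp, show t' - τ₂ + (τ₂ - τ₁) = t' - τ₁ by ring]
          · apply intervalIntegral.integral_congr
            intro σ _
            show U (t' - σ) ((B σ) ((SB σ τ₁) x)) =
              U (t' - τ₂) (U (τ₂ - σ) ((B σ) ((SB σ τ₁) x)))
            rw [hUcomp, show t' - τ₂ + (τ₂ - σ) = t' - σ by ring]
  -- key two-parameter estimate
  have hKE : ∀ (x : X), ∀ τ₁ ∈ Icc s T, ∀ τ₂ ∈ Icc τ₁ T, ∀ σ ∈ Icc s T,
      ‖SB (max σ τ₁) τ₁ x - SB (max σ τ₂) τ₂ x‖ ≤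
        C * (‖U (τ₂ - τ₁) x - x‖ + ‖U (min (max σ τ₁) τ₂ - τ₁) x - x‖ +
          2 * ((τ₂ - τ₁) * (M * (C * ‖x‖)))) := by
    intro x τ₁ hτ₁ τ₂ hτ₂ σ hσ
    have hτ₂' : τ₂ ∈ Icc s T := ⟨le_trans hτ₁.1 hτ₂.1, hτ₂.2⟩
    have hMC : 0 ≤ M * (C * ‖x‖) := by positivity
    have h21 : 0 ≤ τ₂ - τ₁ := by linarith [hτ₂.1]
    have hC0' : (0:ℝ) ≤ C := le_trans zero_le_one hC1
    rcases le_total τ₂ σ with hc | hc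
    · have hm1 : max σ τ₁ = σ := max_eq_left (le_trans hτ₂.1 hc)
      have hm2 : max σ τ₂ = σ := max_eq_left hc
      have hσ2 : σ ∈ Icc τ₂ T := ⟨hc, hσ.2⟩
      rw [hm1, hm2, hcoc τ₁ hτ₁ τ₂ hτ₂ x σ hσ2, ← map_sub]
      have hb1 : ‖SB σ τ₂ (SB τ₂ τ₁ x - x)‖ ≤ C * ‖SB τ₂ τ₁ x - x‖ :=
        hSBnorm τ₂ hτ₂' σ hσ2 _
      have hb2 : ‖SB τ₂ τ₁ x - x‖ ≤ ‖U (τ₂ - τ₁) x - x‖ + (τ₂ - τ₁) * (M * (C * ‖x‖)) :=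
        hQ1' τ₁ hτ₁ τ₂ hτ₂ x
      calc ‖SB σ τ₂ (SB τ₂ τ₁ x - x)‖ ≤ C * ‖SB τ₂ τ₁ x - x‖ := hb1
        _ ≤ C * (‖U (τ₂ - τ₁) x - x‖ + (τ₂ - τ₁) * (M * (C * ‖x‖))) :=
            mul_le_mul_of_nonneg_left hb2 hC0'
        _ ≤ _ := by
            apply mul_le_mul_of_nonneg_left _ hC0'
            nlinarith [norm_nonneg (U (min σ τ₂ - τ₁) x - x)]
    · have hm2 : max σ τ₂ = τ₂ := max_eq_right hc
      have hρτ₂ : max σ τ₁ ≤ τ₂ := max_le hc hτ₂.1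
      have hmin : min (max σ τ₁) τ₂ = max σ τ₁ := min_eq_left hρτ₂
      have hρmem : max σ τ₁ ∈ Icc τ₁ T := ⟨le_max_right _ _, max_le hσ.2 hτ₁.2⟩
      rw [hm2, hSBself τ₂ hτ₂' x, hmin]
      have hb2 : ‖SB (max σ τ₁) τ₁ x - x‖ ≤
          ‖U (max σ τ₁ - τ₁) x - x‖ + (max σ τ₁ - τ₁) * (M * (C * ‖x‖)) :=
        hQ1' τ₁ hτ₁ (max σ τ₁) hρmem x
      have hρ1 : max σ τ₁ - τ₁ ≤ τ₂ - τ₁ := by linarith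
      have hρ0 : 0 ≤ max σ τ₁ - τ₁ := by
        have := le_max_right σ τ₁; linarith
      calc ‖SB (max σ τ₁) τ₁ x - x‖
          ≤ ‖U (max σ τ₁ - τ₁) x - x‖ + (max σ τ₁ - τ₁) * (M * (C * ‖x‖)) := hb2
        _ ≤ ‖U (τ₂ - τ₁) x - x‖ + ‖U (max σ τ₁ - τ₁) x - x‖ +
              2 * ((τ₂ - τ₁) * (M * (C * ‖x‖))) := by
            nlinarith [mul_le_mul_of_nonneg_right hρ1 hMC, norm_nonneg (U (τ₂ - τ₁) x - x),
              mul_nonneg h21 hMC]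
        _ ≤ C * (‖U (τ₂ - τ₁) x - x‖ + ‖U (max σ τ₁ - τ₁) x - x‖ +
              2 * ((τ₂ - τ₁) * (M * (C * ‖x‖)))) := by
            apply le_mul_of_one_le_left _ hC1
            have := norm_nonneg (U (τ₂ - τ₁) x - x)
            have := norm_nonneg (U (max σ τ₁ - τ₁) x - x)
            nlinarith [mul_nonneg h21 hMC]
  -- joint continuity of the clamped evolution operator
  have hΨcont : ∀ x : X, Continuous fun p : ℝ × ℝ => SB (max (cl p.1) (cl p.2)) (cl p.2) x := by
    intro x
    rw [continuous_iff_seqContinuous]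
    intro q p hq
    have hτ₀mem : cl p.2 ∈ Icc s T := hcl_mem _
    have hf2 : Continuous fun r : ℝ => SB (max (cl r) (cl p.2)) (cl p.2) x := by
      have hmax : Continuous fun r : ℝ => max (cl r) (cl p.2) := hcl_cont.max continuous_const
      exact (hSBcont (cl p.2) hτ₀mem x).comp_continuous hmax
        (fun r => ⟨le_max_right _ _, max_le (hcl_mem r).2 hτ₀mem.2⟩)
    have hq1 : Filter.Tendsto (fun n => (q n).1) Filter.atTop (nhds p.1) :=
      (continuous_fst.tendsto p).comp hq
    have hq2 : Filter.Tendsto (fun n => (q n).2) Filter.atTop (nhds p.2) :=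
      (continuous_snd.tendsto p).comp hq
    have hqτ : Filter.Tendsto (fun n => cl (q n).2) Filter.atTop (nhds (cl p.2)) :=
      (hcl_cont.tendsto _).comp hq2
    have hterm2 : Filter.Tendsto (fun n => SB (max (cl (q n).1) (cl p.2)) (cl p.2) x)
        Filter.atTop (nhds (SB (max (cl p.1) (cl p.2)) (cl p.2) x)) := (hf2.tendsto _).comp hq1
    have hdiff : Filter.Tendsto (fun n => SB (max (cl (q n).1) (cl (q n).2)) (cl (q n).2) x
        - SB (max (cl (q n).1) (cl p.2)) (cl p.2) x) Filter.atTop (nhds 0) := by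
      set τn : ℕ → ℝ := fun n => cl (q n).2 with hτn
      set σn : ℕ → ℝ := fun n => cl (q n).1 with hσn
      set an : ℕ → ℝ := fun n => min (τn n) (cl p.2) with han'
      set bn : ℕ → ℝ := fun n => max (τn n) (cl p.2) with hbn'
      set ρn : ℕ → ℝ := fun n => min (max (σn n) (an n)) (bn n) - an n with hρn'
      have hbound : ∀ n, ‖SB (max (σn n) (τn n)) (τn n) x - SB (max (σn n) (cl p.2)) (cl p.2) x‖ ≤
          C * (‖U (bn n - an n) x - x‖ + ‖U (ρn n) x - x‖ +
            2 * ((bn n - an n) * (M * (C * ‖x‖)))) := by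
        intro n
        rcases le_total (τn n) (cl p.2) with h | h
        · have ha : an n = τn n := min_eq_left h
          have hb : bn n = cl p.2 := max_eq_right h
          have hρ : ρn n = min (max (σn n) (τn n)) (cl p.2) - τn n := by simp only [hρn']; rw [ha, hb]
          rw [hρ, ha, hb]
          exact hKE x (τn n) (hcl_mem _) (cl p.2) ⟨h, hτ₀mem.2⟩ (σn n) (hcl_mem _)
        · have ha : an n = cl p.2 := min_eq_right h
          have hb : bn n = τn n := max_eq_left h
          have hρ : ρn n = min (max (σn n) (cl p.2)) (τn n) - cl p.2 := by simp only [hρn']; rw [ha, hb]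
          rw [hρ, ha, hb, norm_sub_rev]
          exact hKE x (cl p.2) hτ₀mem (τn n) ⟨h, (hcl_mem _).2⟩ (σn n) (hcl_mem _)
      have han : Filter.Tendsto an Filter.atTop (nhds (cl p.2)) := by
        have : Filter.Tendsto (fun n => min (τn n) (cl p.2)) Filter.atTop
            (nhds (min (cl p.2) (cl p.2))) := hqτ.min tendsto_const_nhds
        simpa using this
      have hbn : Filter.Tendsto bn Filter.atTop (nhds (cl p.2)) := by
        have : Filter.Tendsto (fun n => max (τn n) (cl p.2)) Filter.atTop
            (nhds (max (cl p.2) (cl p.2))) := hqτ.max tendsto_const_nhds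
        simpa using this
      have hba : Filter.Tendsto (fun n => bn n - an n) Filter.atTop (nhds 0) := by
        simpa using hbn.sub han
      have hρz : Filter.Tendsto ρn Filter.atTop (nhds 0) := by
        apply tendsto_of_tendsto_of_tendsto_of_le_of_le tendsto_const_nhds hba
        · intro n
          have h1 : an n ≤ min (max (σn n) (an n)) (bn n) :=
            le_min (le_max_right _ _) ((min_le_left _ _).trans (le_max_left _ _))
          simp only [hρn']
          linarith
        · intro n
          have h1 : min (max (σn n) (an n)) (bn n) ≤ bn n := min_le_right _ _
          simp only [hρn']
          linarith
      have hU0' : ∀ (c : ℕ → ℝ), Filter.Tendsto c Filter.atTop (nhds 0) →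
          Filter.Tendsto (fun n => ‖U (c n) x - x‖) Filter.atTop (nhds 0) := by
        intro c hcz
        have h1 : Filter.Tendsto (fun n => U (c n) x) Filter.atTop (nhds (U 0 x)) :=
          ((hUcont x).tendsto 0).comp hcz
        have h2 : Filter.Tendsto (fun n => U (c n) x - x) Filter.atTop (nhds (U 0 x - x)) :=
          h1.sub tendsto_const_nhds
        have h3 : U 0 x - x = 0 := by rw [hU0]; simp
        rw [h3] at h2
        simpa using h2.norm
      have hlim : Filter.Tendsto (fun n => C * (‖U (bn n - an n) x - x‖ + ‖U (ρn n) x - x‖ +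
          2 * ((bn n - an n) * (M * (C * ‖x‖))))) Filter.atTop
          (nhds (C * (0 + 0 + 2 * (0 * (M * (C * ‖x‖)))))) := by
        apply Filter.Tendsto.const_mul
        exact ((hU0' _ hba).add (hU0' _ hρz)).add ((hba.mul_const _).const_mul 2)
      have hlim0 : Filter.Tendsto (fun n => C * (‖U (bn n - an n) x - x‖ + ‖U (ρn n) x - x‖ +
          2 * ((bn n - an n) * (M * (C * ‖x‖))))) Filter.atTop (nhds 0) := by
        simpa using hlim
      exact squeeze_zero_norm hbound hlim0
    have hsum := hdiff.add hterm2
    rw [zero_add] at hsum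
    refine hsum.congr fun n => ?_
    show _ = (_ ∘ _) n
    simp only [Function.comp_apply]
    abel
  -- the inhomogeneity g and the kernel Φ
  set g : ℝ → X := fun τ => D τ (SB τ s ws) with hgdef
  have hgcont : ContinuousOn g (Icc s T) := hDcont.clm_apply (hSBcont s hsmem ws)
  have hgC : Continuous fun r => g (cl r) := hgcont.comp_continuous hcl_cont hcl_mem
  set Φ : ℝ × ℝ → X := fun p => SB (max (cl p.1) (cl p.2)) (cl p.2) (g (cl p.2)) with hΦdef
  have hΦcont : Continuous Φ := by
    rw [continuous_iff_seqContinuous]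
    intro q p hq
    have hq2 : Filter.Tendsto (fun n => (q n).2) Filter.atTop (nhds p.2) :=
      (continuous_snd.tendsto p).comp hq
    have hgn : Filter.Tendsto (fun n => g (cl (q n).2)) Filter.atTop (nhds (g (cl p.2))) :=
      (hgC.tendsto _).comp hq2
    have hΨ : Filter.Tendsto
        (fun n => SB (max (cl (q n).1) (cl (q n).2)) (cl (q n).2) (g (cl p.2))) Filter.atTop
        (nhds (SB (max (cl p.1) (cl p.2)) (cl p.2) (g (cl p.2)))) :=
      ((hΨcont (g (cl p.2))).tendsto p).comp hq
    have hzero : Filter.Tendsto (fun n => SB (max (cl (q n).1) (cl (q n).2)) (cl (q n).2)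
        (g (cl (q n).2) - g (cl p.2))) Filter.atTop (nhds 0) := by
      refine squeeze_zero_norm (a := fun n => C * ‖g (cl (q n).2) - g (cl p.2)‖) (fun n => ?_) ?_
      · exact hSBnorm (cl (q n).2) (hcl_mem _) (max (cl (q n).1) (cl (q n).2))
          ⟨le_max_right _ _, max_le (hcl_mem _).2 (hcl_mem _).2⟩ _
      · have : Filter.Tendsto (fun n => C * ‖g (cl (q n).2) - g (cl p.2)‖) Filter.atTop
            (nhds (C * ‖g (cl p.2) - g (cl p.2)‖)) :=
          ((hgn.sub tendsto_const_nhds).norm).const_mul C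
        simpa using this
    have hsum := hzero.add hΨ
    rw [zero_add] at hsum
    refine hsum.congr fun n => ?_
    show _ = (Φ ∘ q) n
    simp only [Function.comp_apply, hΦdef]
    rw [map_sub]
    abel
  -- Φ agrees with the un-clamped kernel on the triangle
  have hΦtri : ∀ t' ∈ Icc s T, ∀ τ ∈ Icc s t', Φ (t', τ) = SB t' τ (g τ) := by
    intro t' ht' τ hτ
    have hτ' : τ ∈ Icc s T := ⟨hτ.1, le_trans hτ.2 ht'.2⟩
    show SB (max (cl t') (cl τ)) (cl τ) (g (cl τ)) = _
    rw [hcl_id t' ht', hcl_id τ hτ', max_eq_left hτ.2]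
  have hz' : ∀ t' ∈ Icc s T, z t' = ∫ τ in s..t', Φ (t', τ) := by
    intro t' ht'
    rw [hz t']
    apply intervalIntegral.integral_congr
    intro τ hτ
    rw [Set.uIcc_of_le ht'.1] at hτ
    exact (hΦtri t' ht' τ hτ).symm
  have hzcont : ContinuousOn z (Icc s T) := by
    have huncurry : Continuous (Function.uncurry fun t' τ => Φ (t', τ)) :=
      hΦcont.comp (continuous_fst.prodMk continuous_snd)
    have hcont : Continuous fun t' => ∫ τ in s..t', Φ (t', τ) :=
      intervalIntegral.continuous_parametric_intervalIntegral_of_continuous (μ := volume)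
        huncurry continuous_id
    exact hcont.continuousOn.congr hz'
  -- the integral equation satisfied by z
  have hzeq : ∀ t ∈ Icc s T, z t = U (t - s) (0 : X) +
      ∫ τ in s..t, U (t - τ) (B τ (z τ) + g τ) := by
    intro t ht
    rw [map_zero, zero_add]
    set F : ℝ × ℝ → X := fun q => U (t - cl q.1) (B (cl q.1) (Φ q)) with hFdef
    have hBcl : Continuous fun r : ℝ => B (cl r) := hBcont.comp_continuous hcl_cont hcl_mem
    have hFcont : Continuous F :=
      hUc2.comp ((continuous_const.sub (hcl_cont.comp continuous_fst)).prodMk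
        ((hBcl.comp continuous_fst).clm_apply hΦcont))
    have hstepA : z t = ∫ τ in s..t, (U (t - τ) (g τ) + ∫ σ in τ..t, F (σ, τ)) := by
      rw [hz' t ht]
      apply intervalIntegral.integral_congr
      intro τ hτ
      rw [Set.uIcc_of_le ht.1] at hτ
      have hτ' : τ ∈ Icc s T := ⟨hτ.1, le_trans hτ.2 ht.2⟩
      show Φ (t, τ) = _
      rw [hΦtri t ht τ hτ, hSBeq τ hτ' (g τ) t ⟨hτ.2, ht.2⟩]
      congr 1
      apply intervalIntegral.integral_congr
      intro σ hσ
      rw [Set.uIcc_of_le hτ.2] at hσ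
      have hσT : σ ∈ Icc s T := ⟨le_trans hτ.1 hσ.1, le_trans hσ.2 ht.2⟩
      show U (t - σ) (B σ (SB σ τ (g τ))) = U (t - cl σ) (B (cl σ) (Φ (σ, τ)))
      rw [hcl_id σ hσT, hΦtri σ hσT τ ⟨hτ.1, hσ.1⟩]
    have hFiiconst : ∀ τ : ℝ, ∀ c d : ℝ, IntervalIntegrable (fun σ => F (σ, τ)) volume c d :=
      fun τ c d => ((hFcont.comp (continuous_id.prodMk continuous_const)).intervalIntegrable _ _)
    have hswapcont : Continuous (Function.uncurry fun τ σ => F (σ, τ)) :=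
      hFcont.comp (continuous_snd.prodMk continuous_fst)
    have hinner1 : Continuous fun τ => ∫ σ in s..t, F (σ, τ) :=
      intervalIntegral.continuous_parametric_intervalIntegral_of_continuous' (μ := volume)
        hswapcont s t
    have hinner2 : Continuous fun τ => ∫ σ in s..τ, F (σ, τ) :=
      intervalIntegral.continuous_parametric_intervalIntegral_of_continuous (μ := volume)
        hswapcont continuous_id
    have hsplitfun : ∀ τ : ℝ, (∫ σ in τ..t, F (σ, τ)) =
        (∫ σ in s..t, F (σ, τ)) - ∫ σ in s..τ, F (σ, τ) :=
      fun τ => eq_sub_of_add_eq'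
        (intervalIntegral.integral_add_adjacent_intervals (hFiiconst τ s τ) (hFiiconst τ τ t))
    have hB2cont : Continuous fun τ => ∫ σ in τ..t, F (σ, τ) :=
      (hinner1.sub hinner2).congr fun τ => (hsplitfun τ).symm
    have hstepB : z t = (∫ τ in s..t, U (t - τ) (g τ)) + ∫ τ in s..t, ∫ σ in τ..t, F (σ, τ) := by
      rw [hstepA]
      exact intervalIntegral.integral_add (hUii g s T hgcont t s t hsmem ht)
        (hB2cont.intervalIntegrable s t)
    have hswap := triangle_swap ht.1 F hFcont
    have hstepD : (∫ σ in s..t, ∫ τ in s..σ, F (σ, τ)) =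
        ∫ σ in s..t, U (t - σ) (B σ (z σ)) := by
      apply intervalIntegral.integral_congr
      intro σ hσ
      rw [Set.uIcc_of_le ht.1] at hσ
      have hσT : σ ∈ Icc s T := ⟨hσ.1, le_trans hσ.2 ht.2⟩
      have hΦint : IntervalIntegrable (fun τ => Φ (σ, τ)) volume s σ :=
        (hΦcont.comp (continuous_const.prodMk continuous_id)).intervalIntegrable _ _
      have hstep1 : (∫ τ in s..σ, F (σ, τ)) =
          ∫ τ in s..σ, ((U (t - σ)).comp (B σ)) (Φ (σ, τ)) := by
        apply intervalIntegral.integral_congr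
        intro τ _
        show U (t - cl σ) (B (cl σ) (Φ (σ, τ))) = _
        rw [hcl_id σ hσT]
        rfl
      show (∫ τ in s..σ, F (σ, τ)) = _
      rw [hstep1, ((U (t - σ)).comp (B σ)).intervalIntegral_comp_comm hΦint]
      have hzσ : (∫ τ in s..σ, Φ (σ, τ)) = z σ := (hz' σ hσT).symm
      rw [hzσ]
      rfl
    have hzint : IntervalIntegrable (fun σ => U (t - σ) (B σ (z σ))) volume s t :=
      hUii (fun τ => B τ (z τ)) s T (hBcont.clm_apply hzcont) t s t hsmem ht
    rw [hstepB, hswap, hstepD, ← intervalIntegral.integral_add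
      (hUii g s T hgcont t s t hsmem ht) hzint]
    apply intervalIntegral.integral_congr
    intro τ _
    show U (t - τ) (g τ) + U (t - τ) (B τ (z τ)) = U (t - τ) (B τ (z τ) + g τ)
    rw [map_add]
    exact add_comm _ _
  -- supremum of ‖D‖
  have hDne : Nonempty (Icc s T) := ⟨⟨s, hsmem⟩⟩
  set δ := ⨆ τ : Icc s T, ‖D (τ : ℝ)‖ with hδdef
  have hbdd : BddAbove (Set.range fun τ : Icc s T => ‖D (τ : ℝ)‖) :=
    ⟨1, forall_mem_range.2 fun τ => hDbound τ τ.2⟩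
  have hδub : ∀ τ ∈ Icc s T, ‖D τ‖ ≤ δ := fun τ hτ => le_ciSup hbdd ⟨τ, hτ⟩
  have hδ0 : 0 ≤ δ := le_trans (norm_nonneg (D s)) (hδub s hsmem)
  -- a priori bound on the perturbed evolution
  have hvcont := hSBDcont ws
  have hucont := hSBcont s hsmem ws
  have hhv : ContinuousOn (fun τ => (B τ + D τ) (SBD τ ws)) (Icc s T) :=
    (hBcont.add hDcont).clm_apply hvcont
  have hhu : ContinuousOn (fun τ => B τ (SB τ s ws)) (Icc s T) := hBcont.clm_apply hucont
  have hvb : ∀ t ∈ Icc s T, ‖SBD t ws‖ ≤ ‖ws‖ * Real.exp ((M + 1) * (T - s)) := by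
    intro t ht
    have hbd : ∀ τ ∈ Icc s T, ‖(B τ + D τ) (SBD τ ws)‖ ≤ (M + 1) * ‖SBD τ ws‖ + 0 := by
      intro τ hτ
      rw [add_zero]
      calc ‖(B τ + D τ) (SBD τ ws)‖ ≤ ‖B τ + D τ‖ * ‖SBD τ ws‖ :=
            ContinuousLinearMap.le_opNorm _ _
        _ ≤ (M + 1) * ‖SBD τ ws‖ := by
            apply mul_le_mul_of_nonneg_right _ (norm_nonneg _)
            calc ‖B τ + D τ‖ ≤ ‖B τ‖ + ‖D τ‖ := norm_add_le _ _
              _ ≤ M + 1 := add_le_add (hBbound τ hτ) (hDbound τ hτ)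
    have hKey := mild_bound U hU0 hUadd hUiso hUcont (K := M + 1) (ε := 0) (by linarith) le_rfl ws
      (fun t' => SBD t' ws) (fun τ => (B τ + D τ) (SBD τ ws)) hvcont hhv hbd
      (fun t' ht' => hSBDeq ws t' ht') t ht
    calc ‖SBD t ws‖ ≤ (‖ws‖ + 0 * (T - s)) * Real.exp ((M + 1) * (T - s)) := hKey
      _ = ‖ws‖ * Real.exp ((M + 1) * (T - s)) := by ring
  -- the equation for the difference d = v - u
  have hdcont : ContinuousOn (fun t' => SBD t' ws - SB t' s ws) (Icc s T) := hvcont.sub hucont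
  have hdeq : ∀ t ∈ Icc s T, SBD t ws - SB t s ws = U (t - s) (0 : X) +
      ∫ τ in s..t, U (t - τ) (B τ (SBD τ ws - SB τ s ws) + D τ (SBD τ ws)) := by
    intro t ht
    rw [map_zero, zero_add, hSBDeq ws t ht, hSBeq s hsmem ws t ht, add_sub_add_left_eq_sub,
      ← intervalIntegral.integral_sub (hUii _ s T hhv t s t hsmem ht)
        (hUii _ s T hhu t s t hsmem ht)]
    apply intervalIntegral.integral_congr
    intro τ _
    show U (t - τ) ((B τ + D τ) (SBD τ ws)) - U (t - τ) (B τ (SB τ s ws)) = _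
    rw [← map_sub]
    congr 1
    simp only [ContinuousLinearMap.add_apply, map_sub]
    abel
  -- bound on d
  set ε₁ := δ * (‖ws‖ * Real.exp ((M + 1) * (T - s))) with hε₁def
  have hε₁0 : 0 ≤ ε₁ := mul_nonneg hδ0 (mul_nonneg (norm_nonneg _) (Real.exp_pos _).le)
  have hdh : ContinuousOn
      (fun τ => B τ (SBD τ ws - SB τ s ws) + D τ (SBD τ ws)) (Icc s T) :=
    (hBcont.clm_apply hdcont).add (hDcont.clm_apply hvcont)
  have hdbd : ∀ τ ∈ Icc s T,
      ‖B τ (SBD τ ws - SB τ s ws) + D τ (SBD τ ws)‖ ≤ M * ‖SBD τ ws - SB τ s ws‖ + ε₁ := by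
    intro τ hτ
    calc ‖B τ (SBD τ ws - SB τ s ws) + D τ (SBD τ ws)‖
        ≤ ‖B τ (SBD τ ws - SB τ s ws)‖ + ‖D τ (SBD τ ws)‖ := norm_add_le _ _
      _ ≤ M * ‖SBD τ ws - SB τ s ws‖ + ε₁ := by
          apply add_le_add
          · calc ‖B τ (SBD τ ws - SB τ s ws)‖ ≤ ‖B τ‖ * ‖SBD τ ws - SB τ s ws‖ :=
                (B τ).le_opNorm _
              _ ≤ M * ‖SBD τ ws - SB τ s ws‖ :=
                mul_le_mul_of_nonneg_right (hBbound τ hτ) (norm_nonneg _)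
          · calc ‖D τ (SBD τ ws)‖ ≤ ‖D τ‖ * ‖SBD τ ws‖ := (D τ).le_opNorm _
              _ ≤ ε₁ := mul_le_mul (hδub τ hτ) (hvb τ hτ) (norm_nonneg _) hδ0
  have hdb : ∀ t ∈ Icc s T, ‖SBD t ws - SB t s ws‖ ≤
      (‖(0:X)‖ + ε₁ * (T - s)) * Real.exp (M * (T - s)) :=
    mild_bound U hU0 hUadd hUiso hUcont hM hε₁0 0 _ _ hdcont hdh hdbd hdeq
  -- equation for the remainder r = d - z
  have hrcont : ContinuousOn (fun t' => SBD t' ws - SB t' s ws - z t') (Icc s T) :=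
    hdcont.sub hzcont
  have hrh : ContinuousOn (fun τ => B τ (SBD τ ws - SB τ s ws - z τ) +
      D τ (SBD τ ws - SB τ s ws)) (Icc s T) :=
    (hBcont.clm_apply hrcont).add (hDcont.clm_apply hdcont)
  have hreq : ∀ t ∈ Icc s T, SBD t ws - SB t s ws - z t = U (t - s) (0 : X) +
      ∫ τ in s..t, U (t - τ) (B τ (SBD τ ws - SB τ s ws - z τ) +
        D τ (SBD τ ws - SB τ s ws)) := by
    intro t ht
    rw [map_zero, zero_add, hdeq t ht, hzeq t ht, map_zero, zero_add, zero_add,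
      ← intervalIntegral.integral_sub (hUii _ s T hdh t s t hsmem ht)
        (hUii (fun τ => B τ (z τ) + g τ) s T ((hBcont.clm_apply hzcont).add hgcont) t s t hsmem ht)]
    apply intervalIntegral.integral_congr
    intro τ _
    show U (t - τ) (B τ (SBD τ ws - SB τ s ws) + D τ (SBD τ ws)) -
        U (t - τ) (B τ (z τ) + g τ) = _
    rw [← map_sub]
    congr 1
    simp only [hgdef, map_sub, map_add]
    abel
  -- final Gronwall application and numeric bookkeeping
  set ε₂ := δ * ((‖(0:X)‖ + ε₁ * (T - s)) * Real.exp (M * (T - s))) with hε₂def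
  have hε₂0 : 0 ≤ ε₂ := by
    have hTs : (0:ℝ) ≤ T - s := by linarith
    exact mul_nonneg hδ0 (mul_nonneg
      (add_nonneg (norm_nonneg _) (mul_nonneg hε₁0 hTs)) (Real.exp_pos _).le)
  have hrbd : ∀ τ ∈ Icc s T, ‖B τ (SBD τ ws - SB τ s ws - z τ) +
      D τ (SBD τ ws - SB τ s ws)‖ ≤ M * ‖SBD τ ws - SB τ s ws - z τ‖ + ε₂ := by
    intro τ hτ
    calc ‖B τ (SBD τ ws - SB τ s ws - z τ) + D τ (SBD τ ws - SB τ s ws)‖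
        ≤ ‖B τ (SBD τ ws - SB τ s ws - z τ)‖ + ‖D τ (SBD τ ws - SB τ s ws)‖ := norm_add_le _ _
      _ ≤ M * ‖SBD τ ws - SB τ s ws - z τ‖ + ε₂ := by
          apply add_le_add
          · calc ‖B τ (SBD τ ws - SB τ s ws - z τ)‖
                ≤ ‖B τ‖ * ‖SBD τ ws - SB τ s ws - z τ‖ := (B τ).le_opNorm _
              _ ≤ M * ‖SBD τ ws - SB τ s ws - z τ‖ :=
                mul_le_mul_of_nonneg_right (hBbound τ hτ) (norm_nonneg _)
          · calc ‖D τ (SBD τ ws - SB τ s ws)‖ ≤ ‖D τ‖ * ‖SBD τ ws - SB τ s ws‖ :=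
                (D τ).le_opNorm _
              _ ≤ ε₂ := mul_le_mul (hδub τ hτ) (hdb τ hτ) (norm_nonneg _) hδ0
  have hrb := mild_bound U hU0 hUadd hUiso hUcont hM hε₂0 0 _ _ hrcont hrh hrbd hreq
  intro t ht
  have hr := hrb t ht
  have hsimp : (‖(0:X)‖ + ε₂ * (T - s)) * Real.exp (M * (T - s)) =
      δ ^ 2 * ‖ws‖ * (T - s) ^ 2 *
        (Real.exp ((M + 1) * (T - s)) * (Real.exp (M * (T - s)) * Real.exp (M * (T - s)))) := by
    rw [hε₂def, hε₁def]
    simp only [norm_zero, zero_add]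
    ring
  have hexp : Real.exp ((M + 1) * (T - s)) * (Real.exp (M * (T - s)) * Real.exp (M * (T - s))) ≤
      Real.exp ((3 * M + 2) * (T - s)) := by
    rw [← Real.exp_add, ← Real.exp_add]
    apply Real.exp_le_exp.2
    nlinarith
  calc ‖SBD t ws - SB t s ws - z t‖
      ≤ (‖(0:X)‖ + ε₂ * (T - s)) * Real.exp (M * (T - s)) := hr
    _ = δ ^ 2 * ‖ws‖ * (T - s) ^ 2 *
        (Real.exp ((M + 1) * (T - s)) * (Real.exp (M * (T - s)) * Real.exp (M * (T - s)))) :=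
        hsimp
    _ ≤ δ ^ 2 * ‖ws‖ * (T - s) ^ 2 * Real.exp ((3 * M + 2) * (T - s)) :=
        mul_le_mul_of_nonneg_left hexp (by positivity)
    _ = (T - s) ^ 2 * Real.exp ((3 * M + 2) * (T - s)) * δ ^ 2 * ‖ws‖ := by ring
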